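/- For the scattering matrix S, the subalgebra {X ∈ M₂(ℂ)⊗M₂(ℂ) : S†(I⊗A)S = X for some A with X a product B⊗C} consists only of scalar multiples of the identity; hence the dimension of the 'patch' D = {S†(I⊗A)S : A ∈ M₂(ℂ)} ∩ {B⊗C products that are of the form I⊗C} is strictly less than 4. -/

import Mathlib

open Complex Matrix Kronecker

/-- Index of the pair `(i,j)` of qubit basis labels in the computational basis
`{|00⟩,|01⟩,|10⟩,|11⟩}` of `ℂ²⊗ℂ²`. -/
def idx (p : Fin 2 × Fin 2) : Fin 4 := ⟨2 * p.1.1 + p.2.1, by omega⟩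

/-- The scattering matrix `S`, acting on `ℂ²⊗ℂ²`. -/
noncomputable def S : Matrix (Fin 2 × Fin 2) (Fin 2 × Fin 2) ℂ :=
  Matrix.of fun p q =>
    (!![1, 0, 0, 0;
       0, 1 / Real.sqrt 2, Complex.I / Real.sqrt 2, 0;
       0, Complex.I / Real.sqrt 2, 1 / Real.sqrt 2, 0;
       0, 0, 0, Complex.I] : Matrix (Fin 4) (Fin 4) ℂ) (idx p) (idx q)

/-- The "patch" `D`: matrices of the form `S†(I⊗A)S` that are also of the
product form `I⊗C`. -/
noncomputable def patchD : Set (Matrix (Fin 2 × Fin 2) (Fin 2 × Fin 2) ℂ) :=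
  {X | (∃ A : Matrix (Fin 2) (Fin 2) ℂ,
          X = Sᴴ * ((1 : Matrix (Fin 2) (Fin 2) ℂ) ⊗ₖ A) * S) ∧
       (∃ C : Matrix (Fin 2) (Fin 2) ℂ,
          X = (1 : Matrix (Fin 2) (Fin 2) ℂ) ⊗ₖ C)}

lemma sqrt2_ne : (Real.sqrt 2 : ℂ) ≠ 0 := by
  norm_num [Complex.ofReal_ne_zero, Real.sqrt_ne_zero']

lemma sqrt2_sq : (Real.sqrt 2 : ℂ) * (Real.sqrt 2 : ℂ) = 2 := by
  rw [← Complex.ofReal_mul, Real.mul_self_sqrt (by norm_num)]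
  norm_num

lemma SHS : Sᴴ * S = 1 := by
  ext ⟨i, j⟩ ⟨k, l⟩
  fin_cases i <;> fin_cases j <;> fin_cases k <;> fin_cases l <;>
    · simp [Matrix.mul_apply, Fintype.sum_prod_type, Fin.sum_univ_two, S, idx,
        Matrix.one_apply, Matrix.conjTranspose_apply, Matrix.vecHead, Matrix.vecTail,
        Prod.ext_iff, map_div₀, Complex.conj_I, Complex.conj_ofReal]
      try field_simp
      try ring_nf
      try simp [sq, sqrt2_sq]
      try norm_num

lemma SSH : S * Sᴴ = 1 := by
  ext ⟨i, j⟩ ⟨k, l⟩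
  fin_cases i <;> fin_cases j <;> fin_cases k <;> fin_cases l <;>
    · simp [Matrix.mul_apply, Fintype.sum_prod_type, Fin.sum_univ_two, S, idx,
        Matrix.one_apply, Matrix.conjTranspose_apply, Matrix.vecHead, Matrix.vecTail,
        Prod.ext_iff, map_div₀, Complex.conj_I, Complex.conj_ofReal]
      try field_simp
      try ring_nf
      try simp [sq, sqrt2_sq]
      try norm_num

/-- From the intertwining relation `(1⊗A)S = S(1⊗C)` we deduce that `C` is scalar. -/
lemma C_scalar (A C : Matrix (Fin 2) (Fin 2) ℂ)
    (h : ((1 : Matrix (Fin 2) (Fin 2) ℂ) ⊗ₖ A) * S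
       = S * ((1 : Matrix (Fin 2) (Fin 2) ℂ) ⊗ₖ C)) :
    C 0 1 = 0 ∧ C 1 0 = 0 ∧ C 1 1 = C 0 0 := by
  have key : ∀ p q, (((1 : Matrix (Fin 2) (Fin 2) ℂ) ⊗ₖ A) * S) p q
      = (S * ((1 : Matrix (Fin 2) (Fin 2) ℂ) ⊗ₖ C)) p q := fun p q => by rw [h]
  have h1 := key (0, 1) (1, 1)
  have h2 := key (1, 0) (0, 0)
  have h3 := key (0, 1) (0, 1)
  have h4 := key (0, 1) (1, 0)
  simp [Matrix.mul_apply, Fintype.sum_prod_type, Fin.sum_univ_two, S, idx,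
    Matrix.one_apply, Matrix.kroneckerMap_apply, Matrix.vecHead, Matrix.vecTail,
    Prod.ext_iff, div_eq_div_iff sqrt2_ne sqrt2_ne, sqrt2_ne, Complex.I_ne_zero] at h1 h2 h3 h4
  refine ⟨h1, h2, ?_⟩
  have e3 : A 1 1 = C 1 1 := by
    rw [mul_comm] at h3
    exact mul_left_cancel₀ (inv_ne_zero sqrt2_ne) h3
  have e4 : A 1 1 = C 0 0 := by
    rw [mul_comm] at h4
    exact mul_left_cancel₀ (div_ne_zero Complex.I_ne_zero sqrt2_ne) h4
  rw [← e3, e4]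

lemma kron_scalar (C : Matrix (Fin 2) (Fin 2) ℂ)
    (h01 : C 0 1 = 0) (h10 : C 1 0 = 0) (h11 : C 1 1 = C 0 0) :
    (1 : Matrix (Fin 2) (Fin 2) ℂ) ⊗ₖ C
      = C 0 0 • (1 : Matrix (Fin 2 × Fin 2) (Fin 2 × Fin 2) ℂ) := by
  have hC : C = C 0 0 • (1 : Matrix (Fin 2) (Fin 2) ℂ) := by
    ext i j
    fin_cases i <;> fin_cases j <;>
      simp [h01, h10, h11, Matrix.one_apply]
  conv_lhs => rw [hC]
  rw [Matrix.kronecker_smul, Matrix.one_kronecker_one]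

lemma smul_one_mem (c : ℂ) :
    c • (1 : Matrix (Fin 2 × Fin 2) (Fin 2 × Fin 2) ℂ) ∈ patchD := by
  constructor
  · refine ⟨c • (1 : Matrix (Fin 2) (Fin 2) ℂ), ?_⟩
    rw [Matrix.kronecker_smul, Matrix.one_kronecker_one, Matrix.mul_smul,
      Matrix.smul_mul, Matrix.mul_one, SHS]
  · exact ⟨c • (1 : Matrix (Fin 2) (Fin 2) ℂ), by
      rw [Matrix.kronecker_smul, Matrix.one_kronecker_one]⟩

/-- The patch `D` consists only of scalar multiples of the identity, hence its
dimension is strictly less than `4 = dim M₂(ℂ)`. -/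
theorem patchD_eq_scalars :
    patchD = Set.range (fun c : ℂ =>
      c • (1 : Matrix (Fin 2 × Fin 2) (Fin 2 × Fin 2) ℂ)) ∧
    Module.finrank ℂ (Submodule.span ℂ patchD) < 4 := by
  have hset : patchD = Set.range (fun c : ℂ =>
      c • (1 : Matrix (Fin 2 × Fin 2) (Fin 2 × Fin 2) ℂ)) := by
    apply Set.eq_of_subset_of_subset
    · rintro X ⟨⟨A, hA⟩, ⟨C, hC⟩⟩
      have hSC : Sᴴ * ((1 : Matrix (Fin 2) (Fin 2) ℂ) ⊗ₖ A) * S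
          = (1 : Matrix (Fin 2) (Fin 2) ℂ) ⊗ₖ C := by rw [← hA, hC]
      have h : ((1 : Matrix (Fin 2) (Fin 2) ℂ) ⊗ₖ A) * S
          = S * ((1 : Matrix (Fin 2) (Fin 2) ℂ) ⊗ₖ C) := by
        calc ((1 : Matrix (Fin 2) (Fin 2) ℂ) ⊗ₖ A) * S
            = (S * Sᴴ) * (((1 : Matrix (Fin 2) (Fin 2) ℂ) ⊗ₖ A) * S) := by
              rw [SSH, one_mul]
          _ = S * (Sᴴ * ((1 : Matrix (Fin 2) (Fin 2) ℂ) ⊗ₖ A) * S) := by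
              noncomm_ring
          _ = S * ((1 : Matrix (Fin 2) (Fin 2) ℂ) ⊗ₖ C) := by rw [hSC]
      obtain ⟨h01, h10, h11⟩ := C_scalar A C h
      refine ⟨C 0 0, ?_⟩
      show C 0 0 • _ = X
      rw [hC, kron_scalar C h01 h10 h11]
    · rintro X ⟨c, rfl⟩
      exact smul_one_mem c
  refine ⟨hset, ?_⟩
  have hspan : Submodule.span ℂ patchD
      = (ℂ ∙ (1 : Matrix (Fin 2 × Fin 2) (Fin 2 × Fin 2) ℂ)) := by
    rw [hset]
    apply le_antisymm
    · rw [Submodule.span_le]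
      rintro X ⟨c, rfl⟩
      exact Submodule.smul_mem _ c (Submodule.mem_span_singleton_self _)
    · rw [Submodule.span_le]
      rintro X hX
      rw [Set.mem_singleton_iff] at hX
      subst hX
      exact Submodule.subset_span ⟨1, by simp⟩
  rw [hspan, finrank_span_singleton]
  · norm_num
  · intro h
    have := congrFun (congrFun h ((0 : Fin 2), (0 : Fin 2))) ((0 : Fin 2), (0 : Fin 2))
    simp [Matrix.one_apply] at this
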